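/- Let x : ℝ → ℝ solve the system: x'(t) + x(t) = 0 on each interval [2k, 2k+1) for k ∈ ℕ, and x(2k+2) − x(2k+1) + x(−1) = 0 at the right endpoints (where x(2k+2) denotes the value at the next interval's start). Then x(2k) = e^{−k}·x(0) − (e/(e−1))·(1 − e^{−k})·x(−1) for all k ∈ ℕ, and if x(−1) ≠ 0 then limsup_{t→∞} |x(t)| = (e/(e−1))·|x(−1)| > 0. -/
import Mathlib

open Filter Set Real

-- pointwise solution on each interval
lemma sol_aux (x : ℝ → ℝ) (a : ℝ)
    (h : ∀ t ∈ Set.Icc a (a + 1), HasDerivWithinAt x (-(x t)) (Set.Icc a (a + 1)) t) :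
    ∀ t ∈ Set.Icc a (a + 1), x t = x a * Real.exp (a - t) := by
  set g : ℝ → ℝ := fun t => x t * Real.exp t with hg
  have hcont : ContinuousOn g (Set.Icc a (a+1)) := by
    intro t ht
    exact ((h t ht).continuousWithinAt.mul (Real.continuous_exp).continuousWithinAt)
  have hderiv : ∀ t ∈ Set.Ico a (a+1), HasDerivWithinAt g 0 (Set.Ici t) t := by
    intro t ht
    have h1 : HasDerivWithinAt g (-(x t) * Real.exp t + x t * Real.exp t)
        (Set.Icc a (a+1)) t :=
      (h t (Set.Ico_subset_Icc_self ht)).mul (Real.hasDerivAt_exp t).hasDerivWithinAt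
    have h2 : HasDerivWithinAt g 0 (Set.Icc a (a+1)) t := by
      convert h1 using 1; ring
    exact h2.mono_of_mem_nhdsWithin (Icc_mem_nhdsGE_of_mem ht)
  have key := constant_of_has_deriv_right_zero hcont hderiv
  intro t ht
  have := key t ht
  simp only [hg] at this
  have hexp : Real.exp t ≠ 0 := Real.exp_ne_zero t
  rw [Real.exp_sub]
  field_simp at this ⊢
  linarith [this]

theorem stmt_10 (x : ℝ → ℝ)
    (hode : ∀ k : ℕ, ∀ t ∈ Set.Icc ((2 * k : ℕ) : ℝ) ((2 * k : ℕ) + 1),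
      HasDerivWithinAt x (-(x t)) (Set.Icc ((2 * k : ℕ) : ℝ) ((2 * k : ℕ) + 1)) t)
    (hjump : ∀ k : ℕ, x ((2 * k : ℕ) + 2) - x ((2 * k : ℕ) + 1) + x (-1) = 0) :
    (∀ k : ℕ, x ((2 * k : ℕ) : ℝ) = Real.exp (-(k : ℝ)) * x 0
        - Real.exp 1 / (Real.exp 1 - 1) * (1 - Real.exp (-(k : ℝ))) * x (-1)) ∧
      (x (-1) ≠ 0 →
        Filter.limsup (fun t => |x t|)
            (Filter.atTop ⊓ Filter.principal (⋃ k : ℕ, Set.Icc ((2 * k : ℕ) : ℝ) ((2 * k : ℕ) + 1)))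
          = Real.exp 1 / (Real.exp 1 - 1) * |x (-1)|) := by
  have E1 : (1:ℝ) < Real.exp 1 := by
    have := Real.exp_one_gt_d9; linarith
  have hE : Real.exp 1 - 1 > 0 := by linarith
  -- pointwise solution
  have hsol : ∀ k : ℕ, ∀ t ∈ Set.Icc ((2 * k : ℕ) : ℝ) ((2 * k : ℕ) + 1),
      x t = x ((2 * k : ℕ) : ℝ) * Real.exp (((2 * k : ℕ) : ℝ) - t) :=
    fun k => sol_aux x _ (hode k)
  -- recursion
  have hrec : ∀ k : ℕ, x ((2 * (k+1) : ℕ) : ℝ)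
      = Real.exp (-1) * x ((2 * k : ℕ) : ℝ) - x (-1) := by
    intro k
    have h1 : x (((2 * k : ℕ) : ℝ) + 1)
        = x ((2 * k : ℕ) : ℝ) * Real.exp (((2 * k : ℕ) : ℝ) - (((2 * k : ℕ) : ℝ) + 1)) := by
      apply hsol k
      constructor <;> [linarith; linarith]
    have h2 := hjump k
    have h3 : ((2 * (k+1) : ℕ) : ℝ) = ((2 * k : ℕ) : ℝ) + 2 := by push_cast; ring
    rw [h3]
    have h4 : (((2 * k : ℕ) : ℝ) - (((2 * k : ℕ) : ℝ) + 1)) = -1 := by ring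
    rw [h4] at h1
    rw [h1] at h2
    linarith
  -- explicit formula
  have hfor : ∀ k : ℕ, x ((2 * k : ℕ) : ℝ) = Real.exp (-(k : ℝ)) * x 0
      - Real.exp 1 / (Real.exp 1 - 1) * (1 - Real.exp (-(k : ℝ))) * x (-1) := by
    intro k
    induction k with
    | zero => simp
    | succ n ih =>
        rw [hrec n, ih]
        have he : Real.exp (-((n:ℝ)+1)) = Real.exp (-(n:ℝ)) * Real.exp (-1) := by
          rw [← Real.exp_add]; ring_nf
        have he1 : Real.exp (-1) = (Real.exp 1)⁻¹ := by
          rw [Real.exp_neg]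
        push_cast
        rw [he, he1]
        have hne : Real.exp 1 ≠ 0 := (Real.exp_pos 1).ne'
        field_simp
        ring
  refine ⟨hfor, fun hx1 => ?_⟩
  have E1 : (1:ℝ) < Real.exp 1 := by have := Real.exp_one_gt_d9; linarith
  have hE : Real.exp 1 - 1 > 0 := by linarith
  set S : Set ℝ := ⋃ k : ℕ, Set.Icc ((2 * k : ℕ) : ℝ) ((2 * k : ℕ) + 1) with hS
  set F : Filter ℝ := Filter.atTop ⊓ Filter.principal S with hF
  set L : ℝ := Real.exp 1 / (Real.exp 1 - 1) * |x (-1)| with hL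
  set c : ℝ := - (Real.exp 1 / (Real.exp 1 - 1) * x (-1)) with hc
  have hLpos : 0 < L := by
    apply mul_pos (div_pos (Real.exp_pos 1) hE)
    exact abs_pos.mpr hx1
  have hcabs : |c| = L := by
    rw [hc, hL, abs_neg, abs_mul, abs_of_pos (div_pos (Real.exp_pos 1) hE)]
  -- tendsto of x(2k)
  have hexp0 : Filter.Tendsto (fun k : ℕ => Real.exp (-(k:ℝ))) Filter.atTop (nhds 0) := by
    apply Real.tendsto_exp_atBot.comp
    exact tendsto_neg_atBot_iff.mpr tendsto_natCast_atTop_atTop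
  have htend : Filter.Tendsto (fun k : ℕ => x ((2 * k : ℕ) : ℝ)) Filter.atTop (nhds c) := by
    have : Filter.Tendsto (fun k : ℕ => Real.exp (-(k:ℝ)) * x 0
        - Real.exp 1 / (Real.exp 1 - 1) * (1 - Real.exp (-(k:ℝ))) * x (-1))
        Filter.atTop (nhds (0 * x 0 - Real.exp 1 / (Real.exp 1 - 1) * (1 - 0) * x (-1))) := by
      exact ((hexp0.mul_const _).sub (((tendsto_const_nhds.sub hexp0).const_mul _).mul_const _))
    simp only [zero_mul, zero_sub, sub_zero, mul_one] at this
    have heq : (fun k : ℕ => x ((2 * k : ℕ) : ℝ)) = fun k : ℕ => Real.exp (-(k:ℝ)) * x 0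
        - Real.exp 1 / (Real.exp 1 - 1) * (1 - Real.exp (-(k:ℝ))) * x (-1) := funext hfor
    have hc2 : c = 0 * x 0 - Real.exp 1 / (Real.exp 1 - 1) * (1 - 0) * x (-1) := by rw [hc]; ring
    rw [heq, hc2]
    exact ((hexp0.mul_const _).sub (((tendsto_const_nhds.sub hexp0).const_mul _).mul_const _))
  have habs : Filter.Tendsto (fun k : ℕ => |x ((2 * k : ℕ) : ℝ)|) Filter.atTop (nhds L) := by
    rw [← hcabs]
    exact htend.abs
  -- the sequence 2k tends to F
  have humem : ∀ k : ℕ, ((2 * k : ℕ) : ℝ) ∈ S := by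
    intro k
    exact Set.mem_iUnion.mpr ⟨k, Set.left_mem_Icc.mpr (by linarith)⟩
  have hu : Filter.Tendsto (fun k : ℕ => ((2 * k : ℕ) : ℝ)) Filter.atTop F := by
    rw [hF]
    refine Filter.tendsto_inf.mpr ⟨?_, ?_⟩
    · apply Filter.tendsto_atTop_mono (fun k => ?_) tendsto_natCast_atTop_atTop
      push_cast; linarith [Nat.cast_nonneg (α := ℝ) k]
    · exact Filter.tendsto_principal.mpr (Filter.Eventually.of_forall humem)
  -- key bound: |x t| ≤ |x (2k)| on interval k
  have hbound : ∀ k : ℕ, ∀ t ∈ Set.Icc ((2 * k : ℕ) : ℝ) ((2 * k : ℕ) + 1),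
      |x t| ≤ |x ((2 * k : ℕ) : ℝ)| := by
    intro k t ht
    rw [hsol k t ht, abs_mul, Real.abs_exp]
    have : Real.exp (((2 * k : ℕ) : ℝ) - t) ≤ 1 := by
      rw [Real.exp_le_one_iff]; linarith [ht.1]
    nlinarith [abs_nonneg (x ((2 * k : ℕ) : ℝ))]
  rw [Filter.limsup_eq]
  apply le_antisymm
  · -- sInf ≤ L : every a > L is in the set, use csInf ≤
    have hbdd : BddBelow {a | ∀ᶠ t in F, |x t| ≤ a} := by
      refine ⟨L / 2, fun a ha => ?_⟩
      by_contra hlt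
      push_neg at hlt
      have hfreq : ∃ᶠ t in F, L / 2 ≤ |x t| := by
        apply hu.frequently
        apply Filter.Eventually.frequently
        filter_upwards [habs.eventually (eventually_ge_nhds (by linarith : L/2 < L))] with k hk
        exact hk
      have ha' : ∀ᶠ t in F, |x t| ≤ a := ha
      obtain ⟨t, h1, h2⟩ := (ha'.and_frequently hfreq).exists
      linarith
    apply le_of_forall_pos_le_add
    intro ε hε
    have hmem : L + ε ∈ {a | ∀ᶠ t in F, |x t| ≤ a} := by
      show ∀ᶠ t in F, |x t| ≤ L + ε
      have hev : ∀ᶠ k : ℕ in Filter.atTop, |x ((2 * k : ℕ) : ℝ)| ≤ L + ε := by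
        filter_upwards [habs.eventually (eventually_le_nhds (by linarith : L < L + ε))] with k hk
        exact hk
      obtain ⟨K, hK⟩ := Filter.eventually_atTop.mp hev
      rw [hF, Filter.eventually_inf_principal]
      filter_upwards [Filter.eventually_ge_atTop (((2 * K : ℕ) : ℝ))] with t ht hts
      obtain ⟨k, hk⟩ := Set.mem_iUnion.mp hts
      have hKk : K ≤ k := by
        have h1 : ((2 * K : ℕ) : ℝ) ≤ ((2 * k : ℕ) : ℝ) + 1 := le_trans ht hk.2
        have : (2 * K : ℕ) ≤ 2 * k + 1 := by exact_mod_cast h1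
        omega
      exact le_trans (hbound k t hk) (hK k hKk)
    exact csInf_le hbdd hmem
  · -- L ≤ sInf : every element of the set is ≥ L (up to ε)
    apply le_csInf
    · refine ⟨L + 1, ?_⟩
      show ∀ᶠ t in F, |x t| ≤ L + 1
      have hev : ∀ᶠ k : ℕ in Filter.atTop, |x ((2 * k : ℕ) : ℝ)| ≤ L + 1 := by
        filter_upwards [habs.eventually (eventually_le_nhds (by linarith : L < L + 1))] with k hk
        exact hk
      obtain ⟨K, hK⟩ := Filter.eventually_atTop.mp hev
      rw [hF, Filter.eventually_inf_principal]
      filter_upwards [Filter.eventually_ge_atTop (((2 * K : ℕ) : ℝ))] with t ht hts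
      obtain ⟨k, hk⟩ := Set.mem_iUnion.mp hts
      have hKk : K ≤ k := by
        have h1 : ((2 * K : ℕ) : ℝ) ≤ ((2 * k : ℕ) : ℝ) + 1 := le_trans ht hk.2
        have : (2 * K : ℕ) ≤ 2 * k + 1 := by exact_mod_cast h1
        omega
      exact le_trans (hbound k t hk) (hK k hKk)
    · intro a ha
      apply le_of_forall_pos_le_add
      intro ε hε
      have hfreq : ∃ᶠ t in F, L - ε ≤ |x t| := by
        apply hu.frequently
        apply Filter.Eventually.frequently
        filter_upwards [habs.eventually (eventually_ge_nhds (by linarith : L - ε < L))] with k hk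
        exact hk
      have ha' : ∀ᶠ t in F, |x t| ≤ a := ha
      obtain ⟨t, h1, h2⟩ := (ha'.and_frequently hfreq).exists
      linarith
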